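/- Let (X_n)_{n∈ℕ} be Banach spaces, X their ℓ₁-sum, ε ∈ (0,1), z ∈ B_X, and n ∈ ℕ such that ‖P_n z‖ > 1 − ε, where P_n is the canonical projection onto the first n coordinates. Then for every ordinal α: if z ∈ σ_{3ε}^α(B_X), then P_n z ∈ σ_ε^α(P_n B_X), where the latter derivation is taken in the Banach space (Σ_{k=1}^n X_k)_{ℓ₁} and P_n B_X is its closed unit ball. -/

import Mathlib

open Metric Set Pointwise

noncomputable section

/-- The weak topology on a normed space `X`: the initial topology with respect to all
continuous linear functionals. -/
noncomputable def weakTop (X : Type*) [NormedAddCommGroup X] [NormedSpace ℝ X] :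
    TopologicalSpace X :=
  ⨅ f : X →L[ℝ] ℝ, TopologicalSpace.induced (⇑f) inferInstance

/-- A set is weakly open if it is open for the weak topology. -/
def IsWeaklyOpen {X : Type*} [NormedAddCommGroup X] [NormedSpace ℝ X] (V : Set X) : Prop :=
  @IsOpen X (weakTop X) V

/-- The derived set `σ_ε(K)`: remove from `K` the union of all weakly open sets `V` whose
trace on `K` has (norm) diameter `< ε`. -/
noncomputable def dSet {X : Type*} [NormedAddCommGroup X] [NormedSpace ℝ X] (ε : ℝ)
    (K : Set X) : Set X :=
  K \ ⋃₀ {V : Set X | IsWeaklyOpen V ∧ Metric.diam (V ∩ K) < ε}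

/-- The transfinite iterates `σ_ε^α(K)`: `σ_ε^0(K) = K`, `σ_ε^{α+1}(K) = σ_ε(σ_ε^α(K))`,
and `σ_ε^α(K) = ⋂_{β<α} σ_ε^β(K)` for `α` a limit ordinal. -/
noncomputable def dIter {X : Type*} [NormedAddCommGroup X] [NormedSpace ℝ X] (ε : ℝ)
    (K : Set X) (α : Ordinal.{0}) : Set X :=
  Ordinal.limitRecOn α K (fun _ ih => dSet ε ih)
    (fun o _ ih => ⋂ (β : Ordinal.{0}) (h : β < o), ih β h)

/-- `Φ(X, ε)`: the least ordinal `α` with `σ_ε^α(B_X) = ∅` (junk value `0` if there is none). -/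
noncomputable def PhiEps (X : Type*) [NormedAddCommGroup X] [NormedSpace ℝ X] (ε : ℝ) :
    Ordinal.{0} :=
  sInf {γ : Ordinal.{0} | dIter ε (Metric.closedBall (0 : X) 1) γ = ∅}

/-- `Φ(X, ε)` is well defined, i.e. some derived iterate of the unit ball is empty. -/
def PhiDefinedAt (X : Type*) [NormedAddCommGroup X] [NormedSpace ℝ X] (ε : ℝ) : Prop :=
  ∃ γ : Ordinal.{0}, dIter ε (Metric.closedBall (0 : X) 1) γ = ∅

/-- `Φ(X) < ∞`, i.e. `Φ(X, ε)` is well defined for every `ε > 0`. -/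
def PhiDefined (X : Type*) [NormedAddCommGroup X] [NormedSpace ℝ X] : Prop :=
  ∀ ε : ℝ, 0 < ε → PhiDefinedAt X ε

/-- The weak-fragmentability index `Φ(X) = sup_{ε > 0} Φ(X, ε)`. -/
noncomputable def Phi (X : Type*) [NormedAddCommGroup X] [NormedSpace ℝ X] : Ordinal.{0} :=
  ⨆ ε : {ε : ℝ // 0 < ε}, PhiEps X ε.1


/-- The canonical projection from the `ℓ₁`-sum `(Σ_n X_n)_{ℓ₁}` onto the `ℓ₁`-sum of the
first `n` coordinates. -/
def Pfin (E : ℕ → Type*) [∀ n, NormedAddCommGroup (E n)] (n : ℕ) (z : lp E 1) :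
    PiLp 1 (fun k : Fin n => E k) :=
  (WithLp.equiv 1 (∀ k : Fin n, E k)).symm (fun k => z k)


-- AUX
section A
variable {X : Type*} [NormedAddCommGroup X] [NormedSpace ℝ X]

theorem dIter_zero (ε : ℝ) (K : Set X) : dIter ε K 0 = K :=
  Ordinal.limitRecOn_zero ..

theorem dIter_succ (ε : ℝ) (K : Set X) (α : Ordinal.{0}) :
    dIter ε K (Order.succ α) = dSet ε (dIter ε K α) :=
  Ordinal.limitRecOn_succ ..

theorem dIter_limit (ε : ℝ) (K : Set X) {α : Ordinal.{0}} (h : Order.IsSuccLimit α) :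
    dIter ε K α = ⋂ (β : Ordinal.{0}) (_ : β < α), dIter ε K β :=
  Ordinal.limitRecOn_limit _ _ _ _ h

theorem dIter_subset (ε : ℝ) (K : Set X) (α : Ordinal.{0}) : dIter ε K α ⊆ K := by
  induction α using Ordinal.limitRecOn with
  | zero => rw [dIter_zero]
  | add_one o ih => rw [Ordinal.add_one_eq_succ, dIter_succ]; exact Set.diff_subset.trans ih
  | limit o ho ih =>
    intro x hx
    rw [dIter_limit _ _ ho] at hx
    have := Set.mem_iInter₂.mp hx 0 ho.pos
    rwa [dIter_zero] at this

theorem clm_weakly_continuous (g : X →L[ℝ] ℝ) : @Continuous X ℝ (weakTop X) _ ⇑g :=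
  continuous_iInf_dom (t₁ := fun f : X →L[ℝ] ℝ => TopologicalSpace.induced (⇑f) inferInstance)
    (i := g) continuous_induced_dom

variable {Y : Type*} [NormedAddCommGroup Y] [NormedSpace ℝ Y]

theorem clm_weakly_weakly_continuous (T : X →L[ℝ] Y) :
    @Continuous X Y (weakTop X) (weakTop Y) ⇑T := by
  rw [show weakTop Y = ⨅ f : Y →L[ℝ] ℝ, TopologicalSpace.induced (⇑f) inferInstance from rfl,
    continuous_iInf_rng]
  intro f
  rw [continuous_induced_rng]
  exact clm_weakly_continuous (f.comp T)

theorem isWeaklyOpen_preimage (T : X →L[ℝ] Y) {V : Set Y} (hV : IsWeaklyOpen V) :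
    IsWeaklyOpen (⇑T ⁻¹' V) :=
  @Continuous.isOpen_preimage X Y (weakTop X) (weakTop Y) ⇑T (clm_weakly_weakly_continuous T) V hV

theorem isWeaklyOpen_halfspace (g : X →L[ℝ] ℝ) (c : ℝ) : IsWeaklyOpen (⇑g ⁻¹' Set.Ioi c) :=
  @Continuous.isOpen_preimage X ℝ (weakTop X) _ ⇑g (clm_weakly_continuous g) _ isOpen_Ioi

end A

section B
variable (E : ℕ → Type) [∀ n, NormedAddCommGroup (E n)] [∀ n, NormedSpace ℝ (E n)]

theorem Pfin_apply (n : ℕ) (z : lp E 1) (k : Fin n) : Pfin E n z k = z k := rfl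

theorem summable_norm_lp (z : lp E 1) : Summable fun i => ‖(z : ∀ i, E i) i‖ := by
  have := lp.memℓp z
  rw [memℓp_gen_iff (by norm_num)] at this
  simpa using this

theorem lp_norm_eq (z : lp E 1) : ‖z‖ = ∑' i, ‖(z : ∀ i, E i) i‖ := by
  rw [lp.norm_eq_tsum_rpow (by norm_num) z]; simp

theorem norm_Pfin (n : ℕ) (z : lp E 1) :
    ‖Pfin E n z‖ = ∑ k : Fin n, ‖(z : ∀ i, E i) k‖ := by
  rw [PiLp.norm_eq_sum (by norm_num)]
  simp [Pfin_apply]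

theorem head_add_tail (n : ℕ) (z : lp E 1) :
    ‖Pfin E n z‖ + ∑' i, ‖(z : ∀ i, E i) (i + n)‖ = ‖z‖ := by
  rw [norm_Pfin, lp_norm_eq, Fin.sum_univ_eq_sum_range (fun k => ‖(z : ∀ i, E i) k‖)]
  exact Summable.sum_add_tsum_nat_add n (summable_norm_lp E z)

theorem norm_Pfin_le (n : ℕ) (z : lp E 1) : ‖Pfin E n z‖ ≤ ‖z‖ := by
  have h := head_add_tail E n z
  have h2 : 0 ≤ ∑' i, ‖(z : ∀ i, E i) (i + n)‖ := tsum_nonneg fun i => norm_nonneg _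
  linarith

def PfinCLM (n : ℕ) : lp E 1 →L[ℝ] PiLp 1 (fun k : Fin n => E k) :=
  LinearMap.mkContinuous
    { toFun := Pfin E n
      map_add' := fun u w => by
        ext k
        show ((u + w : lp E 1) : ∀ i, E i) k = (u : ∀ i, E i) k + (w : ∀ i, E i) k
        simp
      map_smul' := fun c u => by
        ext k
        show ((c • u : lp E 1) : ∀ i, E i) k = c • (u : ∀ i, E i) k
        simp }
    1 (fun z => by rw [one_mul]; exact norm_Pfin_le E n z)

theorem PfinCLM_apply (n : ℕ) (z : lp E 1) : PfinCLM E n z = Pfin E n z := rfl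

end B

set_option maxHeartbeats 1000000 in
/-- **Lemma 3.8.** Let `X` be the `ℓ₁`-sum of Banach spaces `(X_n)`, `ε ∈ (0,1)`, `z ∈ B_X`
and `n` with `‖P_n z‖ > 1 - ε`. Then for every ordinal `α`, `z ∈ σ_{3ε}^α(B_X)` implies
`P_n z ∈ σ_ε^α(P_n B_X)`, the latter derivation taken in `(Σ_{k<n} X_k)_{ℓ₁}`. -/
theorem proj_mem_derived_of_mem_derived (E : ℕ → Type) [∀ n, NormedAddCommGroup (E n)]
    [∀ n, NormedSpace ℝ (E n)] [∀ n, CompleteSpace (E n)]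
    (ε : ℝ) (hε0 : 0 < ε) (hε1 : ε < 1)
    (z : lp E 1) (hz : z ∈ Metric.closedBall (0 : lp E 1) 1)
    (n : ℕ) (hn : 1 - ε < ‖Pfin E n z‖) (a : Ordinal.{0})
    (ha : z ∈ dIter (3 * ε) (Metric.closedBall (0 : lp E 1) 1) a) :
    Pfin E n z ∈ dIter ε (Pfin E n '' Metric.closedBall (0 : lp E 1) 1) a := by
  set B : Set (lp E 1) := Metric.closedBall 0 1 with hB
  set PB : Set (PiLp 1 (fun k : Fin n => E k)) := Pfin E n '' B with hPB
  -- PB is inside the unit ball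
  have hPBball : PB ⊆ Metric.closedBall 0 1 := by
    rintro x ⟨y, hy, rfl⟩
    rw [Metric.mem_closedBall, dist_zero_right]
    exact (norm_Pfin_le E n y).trans (by rwa [Metric.mem_closedBall, dist_zero_right] at hy)
  clear hz
  induction a using Ordinal.limitRecOn generalizing z with
  | zero =>
    rw [dIter_zero] at ha ⊢
    exact Set.mem_image_of_mem _ ha
  | add_one o ih =>
    rw [Ordinal.add_one_eq_succ, dIter_succ] at ha ⊢
    obtain ⟨ha1, ha2⟩ := ha
    refine ⟨ih z hn ha1, ?_⟩
    rintro ⟨V, ⟨hVopen, hVdiam⟩, hzV⟩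
    -- choose a norming functional for Pfin E n z
    have hPz0 : (0 : ℝ) < ‖Pfin E n z‖ := lt_of_lt_of_le (by linarith) hn.le
    have hPzne : Pfin E n z ≠ 0 := by
      intro h; rw [h, norm_zero] at hPz0; exact lt_irrefl _ hPz0
    obtain ⟨g, hg1, hgz⟩ := exists_dual_vector ℝ (Pfin E n z) (norm_ne_zero_iff.mpr hPzne)
    set W : Set (PiLp 1 (fun k : Fin n => E k)) := V ∩ (⇑g ⁻¹' Set.Ioi (1 - ε)) with hW
    set U : Set (lp E 1) := ⇑(PfinCLM E n) ⁻¹' W with hU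
    -- key norm bound for members of U ∩ dIter (3ε) B o
    have hmem : ∀ u ∈ U ∩ dIter (3 * ε) B o,
        u ∈ B ∧ 1 - ε < ‖Pfin E n u‖ ∧ Pfin E n u ∈ V ∩ dIter ε PB o := by
      rintro u ⟨huU, huo⟩
      have huB : u ∈ B := dIter_subset _ _ _ huo
      obtain ⟨huV, hug⟩ := huU
      rw [Set.mem_preimage, Set.mem_Ioi] at hug
      have hgu : g (Pfin E n u) ≤ ‖Pfin E n u‖ := by
        calc g (Pfin E n u) ≤ ‖g (Pfin E n u)‖ := le_abs_self _
          _ ≤ ‖g‖ * ‖Pfin E n u‖ := g.le_opNorm _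
          _ = ‖Pfin E n u‖ := by rw [hg1, one_mul]
      have hun : 1 - ε < ‖Pfin E n u‖ := lt_of_lt_of_le hug hgu
      exact ⟨huB, hun, huV, ih u hun huo⟩
    -- tail bound
    have htail : ∀ u ∈ U ∩ dIter (3 * ε) B o,
        ∑' i, ‖(u : ∀ i, E i) (i + n)‖ < ε := by
      intro u hu
      obtain ⟨huB, hun, -⟩ := hmem u hu
      have h1 : ‖u‖ ≤ 1 := by rwa [hB, Metric.mem_closedBall, dist_zero_right] at huB
      have h2 := head_add_tail E n u
      linarith
    -- the set V ∩ dIter ε PB o is bounded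
    have hbdd : Bornology.IsBounded (V ∩ dIter ε PB o) :=
      Metric.isBounded_closedBall.subset
        (fun x hx => hPBball (dIter_subset _ _ _ hx.2))
    -- the diameter estimate
    have hdiam : Metric.diam (U ∩ dIter (3 * ε) B o) < 3 * ε := by
      have hle : Metric.diam (U ∩ dIter (3 * ε) B o)
          ≤ Metric.diam (V ∩ dIter ε PB o) + 2 * ε := by
        refine Metric.diam_le_of_forall_dist_le
          (by have := Metric.diam_nonneg (s := V ∩ dIter ε PB o); linarith) ?_
        intro u hu w hw
        obtain ⟨huB, -, huV⟩ := hmem u hu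
        obtain ⟨hwB, -, hwV⟩ := hmem w hw
        have hPdist : dist (Pfin E n u) (Pfin E n w) ≤ Metric.diam (V ∩ dIter ε PB o) :=
          Metric.dist_le_diam_of_mem hbdd huV hwV
        have htu := htail u hu
        have htw := htail w hw
        have hsplit : ‖u - w‖ = ‖Pfin E n (u - w)‖ + ∑' i, ‖((u - w : lp E 1) : ∀ i, E i) (i + n)‖ :=
          (head_add_tail E n (u - w)).symm
        have hP : Pfin E n (u - w) = Pfin E n u - Pfin E n w := by
          rw [← PfinCLM_apply, ← PfinCLM_apply, ← PfinCLM_apply, map_sub]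
        have hts : ∑' i, ‖((u - w : lp E 1) : ∀ i, E i) (i + n)‖
            ≤ (∑' i, ‖(u : ∀ i, E i) (i + n)‖) + ∑' i, ‖(w : ∀ i, E i) (i + n)‖ := by
          rw [← Summable.tsum_add ((summable_nat_add_iff n).mpr (summable_norm_lp E u))
            ((summable_nat_add_iff n).mpr (summable_norm_lp E w))]
          refine Summable.tsum_le_tsum (fun i => ?_)
            ((summable_nat_add_iff n).mpr (summable_norm_lp E (u - w)))
            (((summable_nat_add_iff n).mpr (summable_norm_lp E u)).add
              ((summable_nat_add_iff n).mpr (summable_norm_lp E w)))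
          have : ((u - w : lp E 1) : ∀ i, E i) (i + n)
              = (u : ∀ i, E i) (i + n) - (w : ∀ i, E i) (i + n) := by
            rw [lp.coeFn_sub]; rfl
          rw [this]
          exact norm_sub_le _ _
        calc dist u w = ‖u - w‖ := dist_eq_norm u w
          _ = ‖Pfin E n (u - w)‖ + ∑' i, ‖((u - w : lp E 1) : ∀ i, E i) (i + n)‖ := hsplit
          _ ≤ dist (Pfin E n u) (Pfin E n w)
              + ((∑' i, ‖(u : ∀ i, E i) (i + n)‖) + ∑' i, ‖(w : ∀ i, E i) (i + n)‖) := by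
            rw [hP, ← dist_eq_norm]
            exact add_le_add le_rfl hts
          _ ≤ Metric.diam (V ∩ dIter ε PB o) + 2 * ε := by linarith
      linarith
    -- U is weakly open and contains z : contradiction
    refine ha2 ⟨U, ⟨?_, hdiam⟩, ?_, ?_⟩
    · exact isWeaklyOpen_preimage (PfinCLM E n)
        (@IsOpen.inter _ (weakTop _) _ _ hVopen (isWeaklyOpen_halfspace g (1 - ε)))
    · exact hzV
    · rw [Set.mem_preimage, Set.mem_Ioi, PfinCLM_apply, hgz]
      exact hn
  | limit o ho ih =>
    rw [dIter_limit _ _ ho] at ha ⊢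
    exact Set.mem_iInter₂.mpr fun β hβ => ih β hβ z hn (Set.mem_iInter₂.mp ha β hβ)

end
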